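/- Let A = ⟨Q, Σ₀ ∪ {a}⟩ be an almost group automaton with G = ⟨Σ₀⟩ transitive and e = excl(a). Then the vertex set C_e of the strongly connected component of e in Γ₁(A) is a block of the group G acting on Q: for every ρ ∈ G, either C_e·ρ = C_e or C_e·ρ ∩ C_e = ∅. -/

import Mathlib

/-- The transformation monoid generated by the permutation letters S0 and the
defect-1 letter a. -/
def Mgen {Q : Type*} (S0 : Set (Equiv.Perm Q)) (a : Function.End Q) :
    Submonoid (Function.End Q) :=
  Submonoid.closure ((fun σ : Equiv.Perm Q => (⇑σ : Function.End Q)) '' S0 ∪ {a})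

/-- Edges of the Rystsov graph Γ₁(A). -/
def edge {Q : Type*} (S0 : Set (Equiv.Perm Q)) (a : Function.End Q)
    (q p : Q) : Prop :=
  ∃ w ∈ Mgen S0 a, ((Set.range (w : Q → Q))ᶜ : Set Q) = {q} ∧
    {x : Q | ∃ y z : Q, y ≠ z ∧ w y = x ∧ w z = x} = {p}

/-- The strongly connected component of q in Γ₁(A). -/
def scc {Q : Type*} (S0 : Set (Equiv.Perm Q)) (a : Function.End Q)
    (q : Q) : Set Q :=
  {p : Q | Relation.ReflTransGen (edge S0 a) q p ∧
    Relation.ReflTransGen (edge S0 a) p q}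

private def pe {Q : Type*} (σ : Equiv.Perm Q) : Function.End Q := ⇑σ

private lemma coe_pow_end {Q : Type*} (σ : Equiv.Perm Q) (k : ℕ) :
    pe (σ ^ k) = (pe σ) ^ k := by
  induction k with
  | zero => rfl
  | succ n ih =>
      rw [pow_succ, pow_succ, ← ih]
      rfl

private lemma mem_Mgen {Q : Type*} [Fintype Q] (S0 : Set (Equiv.Perm Q))
    (a : Function.End Q) {ρ : Equiv.Perm Q} (hρ : ρ ∈ Subgroup.closure S0) :
    (⇑ρ : Function.End Q) ∈ Mgen S0 a := by
  classical
  induction hρ using Subgroup.closure_induction with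
  | mem σ hσ =>
      exact Submonoid.subset_closure (Or.inl ⟨σ, hσ, rfl⟩)
  | one => exact one_mem _
  | mul σ τ _ _ hσ hτ =>
      exact mul_mem (show pe σ ∈ Mgen S0 a from hσ) (show pe τ ∈ Mgen S0 a from hτ)
  | inv σ _ hσ =>
      have hpos : 0 < orderOf σ := orderOf_pos σ
      have h1 : σ * σ ^ (orderOf σ - 1) = 1 := by
        rw [← pow_succ', Nat.sub_add_cancel hpos, pow_orderOf_eq_one]
      have h2 : σ⁻¹ = σ ^ (orderOf σ - 1) := inv_eq_of_mul_eq_one_right h1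
      show pe σ⁻¹ ∈ Mgen S0 a
      rw [h2, coe_pow_end]
      exact pow_mem (show pe σ ∈ Mgen S0 a from hσ) _

private lemma edge_map {Q : Type*} [Fintype Q] (S0 : Set (Equiv.Perm Q))
    (a : Function.End Q) {ρ : Equiv.Perm Q} (hρ : ρ ∈ Subgroup.closure S0)
    {q p : Q} (h : edge S0 a q p) : edge S0 a (ρ q) (ρ p) := by
  obtain ⟨w, hw, h1, h2⟩ := h
  refine ⟨pe ρ * w, mul_mem (mem_Mgen S0 a hρ) hw, ?_, ?_⟩
  · have hr : Set.range ((pe ρ * w : Function.End Q) : Q → Q)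
        = ρ '' Set.range (w : Q → Q) := by
      exact Set.range_comp (⇑ρ) (w : Q → Q)
    rw [hr, ← Equiv.image_compl, h1, Set.image_singleton]
  · ext x
    simp only [Set.mem_setOf_eq, Set.mem_singleton_iff]
    constructor
    · rintro ⟨y, z, hyz, hy, hz⟩
      have hy' : ρ (w y) = x := hy
      have hz' : ρ (w z) = x := hz
      have hwz : w z = w y := ρ.injective (by rw [hy', hz'])
      have : w y ∈ ({p} : Set Q) := by
        rw [← h2]; exact ⟨y, z, hyz, rfl, hwz⟩
      rw [Set.mem_singleton_iff] at this
      rw [← hy', this]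
    · rintro rfl
      have : p ∈ {x : Q | ∃ y z : Q, y ≠ z ∧ w y = x ∧ w z = x} := by
        rw [h2]; rfl
      obtain ⟨y, z, hyz, hy, hz⟩ := this
      exact ⟨y, z, hyz, by show ρ (w y) = ρ p; rw [hy],
        by show ρ (w z) = ρ p; rw [hz]⟩

private lemma rtg_map {Q : Type*} [Fintype Q] (S0 : Set (Equiv.Perm Q))
    (a : Function.End Q) {ρ : Equiv.Perm Q} (hρ : ρ ∈ Subgroup.closure S0)
    {q p : Q} (h : Relation.ReflTransGen (edge S0 a) q p) :
    Relation.ReflTransGen (edge S0 a) (ρ q) (ρ p) := by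
  induction h with
  | refl => exact Relation.ReflTransGen.refl
  | tail _ he ih => exact ih.tail (edge_map S0 a hρ he)

private lemma scc_image {Q : Type*} [Fintype Q] (S0 : Set (Equiv.Perm Q))
    (a : Function.End Q) {ρ : Equiv.Perm Q} (hρ : ρ ∈ Subgroup.closure S0)
    (q : Q) : ρ '' scc S0 a q = scc S0 a (ρ q) := by
  ext x
  constructor
  · rintro ⟨y, ⟨h1, h2⟩, rfl⟩
    exact ⟨rtg_map S0 a hρ h1, rtg_map S0 a hρ h2⟩
  · rintro ⟨h1, h2⟩
    refine ⟨ρ⁻¹ x, ⟨?_, ?_⟩, by simp⟩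
    · have := rtg_map S0 a (inv_mem hρ) h1
      simpa using this
    · have := rtg_map S0 a (inv_mem hρ) h2
      simpa using this

private lemma scc_congr {Q : Type*} (S0 : Set (Equiv.Perm Q))
    (a : Function.End Q) {q x : Q} (hx : x ∈ scc S0 a q) :
    scc S0 a q = scc S0 a x := by
  obtain ⟨h1, h2⟩ := hx
  ext y
  exact ⟨fun ⟨hy1, hy2⟩ => ⟨h2.trans hy1, hy2.trans h1⟩,
    fun ⟨hy1, hy2⟩ => ⟨h1.trans hy1, hy2.trans h2⟩⟩

/-- The strongly connected component of e in Γ₁(A) is a block of the group G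
acting on Q. -/
theorem stmt13 {Q : Type*} [Fintype Q] (S0 : Set (Equiv.Perm Q))
    (a : Function.End Q) (e : Q)
    (ha : ((Set.range (a : Q → Q))ᶜ : Set Q) = {e})
    (htrans : ∀ p q : Q, ∃ σ ∈ Subgroup.closure S0, σ p = q) :
    ∀ ρ ∈ Subgroup.closure S0,
      ρ '' scc S0 a e = scc S0 a e ∨ (ρ '' scc S0 a e) ∩ scc S0 a e = ∅ := by
  intro ρ hρ
  by_cases h : (ρ '' scc S0 a e) ∩ scc S0 a e = ∅
  · exact Or.inr h
  · left
    obtain ⟨x, hx1, hx2⟩ := Set.nonempty_iff_ne_empty.mpr h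
    rw [scc_image S0 a hρ] at hx1 ⊢
    rw [scc_congr S0 a hx1, scc_congr S0 a hx2]
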